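/- Let 0 < δ < 1 and let z be a point of the open unit disk D with |1−z| > δ. Then ∫_{δ<|t|<π} (1−|z|²)/|e^{it}−z|² dt ≥ π; equivalently, the harmonic measure at z of the arc E_δ = {e^{it} : δ ≤ |t| ≤ π} in D is at least 1/2. -/

import Mathlib

open MeasureTheory Real
set_option maxHeartbeats 2000000

noncomputable def Q (r : ℝ) (u : ℝ) : ℝ := (1 - r^2) / (1 - 2*r*Real.cos u + r^2)

lemma denom_pos {s : ℝ} (hs1 : -1 < s) (hs2 : s < 1) (u : ℝ) :
    0 < 1 - 2*s*Real.cos u + s^2 := by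
  have h1 : |s * Real.cos u| ≤ |s| := by
    rw [abs_mul]
    exact mul_le_of_le_one_right (abs_nonneg _) (Real.abs_cos_le_one u)
  have h2 : s * Real.cos u < 1 := lt_of_le_of_lt (le_trans (le_abs_self _) h1) (abs_lt.2 ⟨hs1, hs2⟩)
  have h3 : (0:ℝ) ≤ 1 - Real.cos u ^ 2 := by
    nlinarith [Real.cos_le_one u, Real.neg_one_le_cos u]
  nlinarith [mul_pos (sub_pos.2 h2) (sub_pos.2 h2), mul_nonneg (sq_nonneg s) h3]

lemma Q_cont {s : ℝ} (hs1 : -1 < s) (hs2 : s < 1) : Continuous (Q s) := by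
  apply Continuous.div (by continuity) (by continuity)
  exact fun u => (denom_pos hs1 hs2 u).ne'

lemma Q_intble {s : ℝ} (hs1 : -1 < s) (hs2 : s < 1) (a b : ℝ) :
    IntervalIntegrable (Q s) volume a b :=
  (Q_cont hs1 hs2).intervalIntegrable a b

lemma Q_even {s u : ℝ} : Q s (-u) = Q s u := by simp [Q]

noncomputable def g (s u : ℝ) : ℝ := 2 * Real.arctan ((1+s)/(1-s) * Real.tan (u/2))

lemma hasDerivAt_g {s : ℝ} (hs1 : -1 < s) (hs2 : s < 1) {u : ℝ} (hu : Real.cos (u/2) ≠ 0) :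
    HasDerivAt (g s) (Q s u) u := by
  have h1 : HasDerivAt (fun v : ℝ => v/2) (1/2) u := (hasDerivAt_id u).div_const 2
  have h2 : HasDerivAt (fun v : ℝ => Real.tan (v/2)) (1/Real.cos (u/2)^2 * (1/2)) u :=
    (Real.hasDerivAt_tan hu).comp (h := fun v : ℝ => v/2) u h1
  have h3 : HasDerivAt (fun v : ℝ => (1+s)/(1-s) * Real.tan (v/2))
      ((1+s)/(1-s) * (1/Real.cos (u/2)^2 * (1/2))) u := h2.const_mul _
  have h4 := ((Real.hasDerivAt_arctan ((1+s)/(1-s) * Real.tan (u/2))).comp u h3).const_mul 2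
  refine h4.congr_deriv (Eq.symm ?_)
  have hcu : Real.cos u = 2 * Real.cos (u/2)^2 - 1 := by
    have := Real.cos_sq (u/2)
    rw [show 2 * (u/2) = u by ring] at this
    linarith
  have hsin : Real.sin (u/2)^2 = 1 - Real.cos (u/2)^2 := Real.sin_sq _
  have h1s : (1:ℝ) - s ≠ 0 := by linarith
  have hden : (1:ℝ) - 2*s*Real.cos u + s^2 ≠ 0 := (denom_pos hs1 hs2 u).ne'
  have hpos : (0:ℝ) < 1 + ((1+s)/(1-s) * Real.tan (u/2))^2 := by positivity
  rw [Real.tan_eq_sin_div_cos]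
  rw [Real.tan_eq_sin_div_cos] at hpos
  show Q s u = 2 * (1 / (1 + ((1+s)/(1-s) * (Real.sin (u/2)/Real.cos (u/2)))^2) *
      ((1+s)/(1-s) * (1/Real.cos (u/2)^2 * (1/2))))
  rw [Q]
  rw [hcu] at hden ⊢
  field_simp
  rw [div_eq_iff (by convert hden using 2; ring)]
  linear_combination ((1 - s^2) * (1+s)^2) * hsin



lemma cos_half_ne {u : ℝ} (h1 : -π < u) (h2 : u < π) : Real.cos (u/2) ≠ 0 :=
  (Real.cos_pos_of_mem_Ioo ⟨by linarith, by linarith⟩).ne'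

lemma integral_Q {s a b : ℝ} (hs1 : -1 < s) (hs2 : s < 1)
    (h : ∀ u ∈ Set.uIcc a b, -π < u ∧ u < π) :
    ∫ u in a..b, Q s u = g s b - g s a :=
  intervalIntegral.integral_eq_sub_of_hasDerivAt
    (fun u hu => hasDerivAt_g hs1 hs2 (cos_half_ne (h u hu).1 (h u hu).2))
    (Q_intble hs1 hs2 a b)

lemma Q_reflect {s u : ℝ} : Q s u = Q (-s) (π - u) := by
  simp [Q, Real.cos_pi_sub]

lemma integral_total {s : ℝ} (hs1 : -1 < s) (hs2 : s < 1) :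
    ∫ u in (-π)..π, Q s u = 2*π := by
  have hπ := Real.pi_pos
  have hs1' : -1 < -s := by linarith
  have hs2' : -s < 1 := by linarith
  have k1 : (0:ℝ) < (1+s)/(1-s) := by
    apply div_pos <;> linarith
  have hA : ∫ u in (-(π/2))..(π/2), Q s u = 4 * Real.arctan ((1+s)/(1-s)) := by
    rw [integral_Q hs1 hs2 (fun u hu => ?_)]
    · rw [g, g, show (π/2)/2 = π/4 by ring, show (-(π/2))/2 = -(π/4) by ring,
        Real.tan_neg, Real.tan_pi_div_four]
      rw [show (1+s)/(1-s) * -1 = -((1+s)/(1-s) * 1) by ring, Real.arctan_neg]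
      ring
    · rw [Set.uIcc_of_le (by linarith)] at hu
      constructor <;> [linarith [hu.1]; linarith [hu.2]]
  have hB : ∫ u in (π/2)..π, Q s u = 2 * Real.arctan ((1-s)/(1+s)) := by
    have e1 : ∫ u in (π/2)..π, Q s u = ∫ u in (π/2)..π, Q (-s) (π - u) := by
      apply intervalIntegral.integral_congr
      intro x _
      exact Q_reflect
    rw [e1, intervalIntegral.integral_comp_sub_left (Q (-s)) π, sub_self,
      show π - π/2 = π/2 by ring,
      integral_Q hs1' hs2' (fun u hu => ?_)]
    · rw [g, g, show (π/2)/2 = π/4 by ring, Real.tan_pi_div_four]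
      norm_num [Real.arctan_zero]
      ring_nf
    · rw [Set.uIcc_of_le (by linarith)] at hu
      constructor <;> [linarith [hu.1]; linarith [hu.2]]
  have hC : ∫ u in (-π)..(-(π/2)), Q s u = 2 * Real.arctan ((1-s)/(1+s)) := by
    have e1 : ∫ u in (π/2)..π, Q s (-u) = ∫ u in (-π)..(-(π/2)), Q s u :=
      intervalIntegral.integral_comp_neg (Q s)
    rw [← e1, ← hB]
    apply intervalIntegral.integral_congr
    intro x _
    exact Q_even
  have add1 := intervalIntegral.integral_add_adjacent_intervals
    (Q_intble hs1 hs2 (-π) (-(π/2))) (Q_intble hs1 hs2 (-(π/2)) (π/2))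
  have add2 := intervalIntegral.integral_add_adjacent_intervals
    (Q_intble hs1 hs2 (-π) (π/2)) (Q_intble hs1 hs2 (π/2) π)
  have harct : Real.arctan ((1-s)/(1+s)) = π/2 - Real.arctan ((1+s)/(1-s)) := by
    rw [show (1-s)/(1+s) = ((1+s)/(1-s))⁻¹ by rw [inv_div]]
    exact Real.arctan_inv_of_pos k1
  rw [← add2, ← add1, hA, hB, hC, harct]
  ring


lemma shift_le {s δ φ : ℝ} (hs0 : 0 ≤ s) (hs1 : s < 1) (hδ : 0 < δ)
    (h1 : δ ≤ φ) (h2 : φ ≤ π) :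
    ∫ u in (φ-δ)..(φ+δ), Q s u ≤ ∫ u in (0:ℝ)..(2*δ), Q s u := by
  have hs1' : (-1:ℝ) < s := by linarith
  have key : ∫ u in (2*δ)..(φ+δ), Q s u ≤ ∫ u in (0:ℝ)..(φ-δ), Q s u := by
    have e := intervalIntegral.integral_comp_add_right (a := 0) (b := φ-δ) (Q s) (2*δ)
    rw [show (0:ℝ)+2*δ = 2*δ by ring, show φ-δ+2*δ = φ+δ by ring] at e
    rw [← e]
    have hcont : Continuous (fun v : ℝ => Q s (v + 2*δ)) :=
      (Q_cont hs1' hs1).comp (continuous_id.add continuous_const)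
    apply intervalIntegral.integral_mono_on (by linarith)
      (hcont.intervalIntegrable 0 (φ-δ))
      (Q_intble hs1' hs1 0 (φ-δ))
    · intro x hx
      have hx1 : 0 ≤ x := hx.1
      have hx2 : x ≤ φ - δ := hx.2
      have hcos : Real.cos (x + 2*δ) ≤ Real.cos x := by
        have h := Real.cos_sub_cos x (x + 2*δ)
        have hsin1 : 0 ≤ Real.sin (x + δ) := by
          apply Real.sin_nonneg_of_nonneg_of_le_pi <;> linarith
        have hsin2 : 0 ≤ Real.sin δ := by
          apply Real.sin_nonneg_of_nonneg_of_le_pi <;> linarith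
        have : (x + (x + 2*δ))/2 = x + δ := by ring
        rw [this] at h
        have : (x - (x + 2*δ))/2 = -δ := by ring
        rw [this, Real.sin_neg] at h
        nlinarith
      rw [Q, Q]
      apply div_le_div_of_nonneg_left ?_ (denom_pos hs1' hs1 x) ?_
      · nlinarith
      · nlinarith
  have a1 := intervalIntegral.integral_add_adjacent_intervals
    (Q_intble hs1' hs1 0 (φ-δ)) (Q_intble hs1' hs1 (φ-δ) (φ+δ))
  have a2 := intervalIntegral.integral_add_adjacent_intervals
    (Q_intble hs1' hs1 0 (2*δ)) (Q_intble hs1' hs1 (2*δ) (φ+δ))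
  linarith [a1, a2, key]

lemma case_b {s δ φ : ℝ} (hs0 : 0 ≤ s) (hs1 : s < 1) (hδ0 : 0 < δ) (hδ1 : δ < 1)
    (hφ0 : 0 ≤ φ) (hφδ : φ < δ)
    (hcon : 2*s*Real.cos φ < 1 + s^2 - δ^2) :
    ∫ u in (φ-δ)..(φ+δ), Q s u ≤ π := by
  have hπ3 : (3:ℝ) < π := by linarith [Real.pi_gt_three]
  have hs1' : (-1:ℝ) < s := by linarith
  have hbound : ∀ u ∈ Set.uIcc (φ-δ) (φ+δ), -π < u ∧ u < π := by
    intro u hu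
    rw [Set.uIcc_of_le (by linarith)] at hu
    constructor <;> [linarith [hu.1]; linarith [hu.2]]
  rw [integral_Q hs1' hs1 hbound]
  obtain ⟨k, hk⟩ : ∃ k : ℝ, k = (1+s)/(1-s) := ⟨_, rfl⟩
  have hkpos : 0 < k := by rw [hk]; apply div_pos <;> linarith
  obtain ⟨x, hxd⟩ : ∃ x : ℝ, x = (φ+δ)/2 := ⟨_, rfl⟩
  obtain ⟨y, hyd⟩ : ∃ y : ℝ, y = (δ-φ)/2 := ⟨_, rfl⟩
  have hx0 : 0 < x := by rw [hxd]; positivity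
  have hxlt : x < π/2 := by
    have : x < δ := by rw [hxd]; linarith
    linarith
  have hy0 : 0 < y := by rw [hyd]; linarith
  have hylt : y < π/2 := by
    have : y ≤ δ/2 := by rw [hyd]; linarith
    linarith
  have hcx : 0 < Real.cos x := Real.cos_pos_of_mem_Ioo ⟨by linarith, hxlt⟩
  have hcy : 0 < Real.cos y := Real.cos_pos_of_mem_Ioo ⟨by linarith, hylt⟩
  have htx : 0 < Real.tan x := Real.tan_pos_of_pos_of_lt_pi_div_two hx0 hxlt
  have hty : 0 < Real.tan y := Real.tan_pos_of_pos_of_lt_pi_div_two hy0 hylt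
  -- (φ-δ)/2 = -y
  have hgb : g s (φ+δ) = 2 * Real.arctan (k * Real.tan x) := by rw [g, hk, hxd]
  have hga : g s (φ-δ) = -(2 * Real.arctan (k * Real.tan y)) := by
    rw [g, show (φ-δ)/2 = -y by rw [hyd]; ring, Real.tan_neg,
      show (1+s)/(1-s) * -Real.tan y = -(k * Real.tan y) by rw [hk]; ring, Real.arctan_neg]
    ring
  rw [hgb, hga]
  -- key : k * tan x * (k * tan y) ≤ 1
  have hprod : k * Real.tan x * (k * Real.tan y) ≤ 1 := by
    have hsub : Real.cos φ - Real.cos δ = 2 * Real.sin x * Real.sin y := by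
      have h := Real.cos_sub_cos φ δ
      rw [show (φ+δ)/2 = x by rw [hxd], show (φ-δ)/2 = -y by rw [hyd]; ring,
        Real.sin_neg] at h
      linarith
    have hadd : Real.cos φ + Real.cos δ = 2 * Real.cos x * Real.cos y := by
      have h := Real.cos_add_cos φ δ
      rw [show (φ+δ)/2 = x by rw [hxd], show (φ-δ)/2 = -y by rw [hyd]; ring,
        Real.cos_neg] at h
      exact h
    -- main : (1+s)^2 * (cos φ - cos δ) ≤ (1-s)^2 * (cos φ + cos δ)
    have hcosδ : 1 - Real.cos δ ≤ δ^2/2 := by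
      have h1 : Real.sin (δ/2) ≤ δ/2 := Real.sin_le (by linarith)
      have h2 : 0 ≤ Real.sin (δ/2) := Real.sin_nonneg_of_nonneg_of_le_pi (by linarith) (by linarith)
      have h3 := Real.cos_sq (δ/2)
      rw [show 2*(δ/2) = δ by ring] at h3
      have h4 := Real.sin_sq (δ/2)
      nlinarith
    have hs1m : (0:ℝ) ≤ 1 - s^2 := by nlinarith
    have hc1 : (0:ℝ) ≤ 1 - Real.cos δ := by linarith [Real.cos_le_one δ]
    have main : (1+s)^2 * (Real.cos φ - Real.cos δ) ≤ (1-s)^2 * (Real.cos φ + Real.cos δ) := by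
      nlinarith [hcon, hcosδ, hs1m, hc1,
        mul_nonneg (by nlinarith : (0:ℝ) ≤ δ^2/2 - (1-Real.cos δ)) (by positivity : (0:ℝ) ≤ 1 + s^2),
        mul_nonneg hc1 hs1m, mul_nonneg hs1m (sq_nonneg δ)]
    rw [hsub, hadd] at main
    rw [hk, Real.tan_eq_sin_div_cos, Real.tan_eq_sin_div_cos]
    have hcxne : Real.cos x ≠ 0 := hcx.ne'
    have hcyne : Real.cos y ≠ 0 := hcy.ne'
    have h1sne : (1:ℝ) - s ≠ 0 := by linarith
    have expand : (1+s)/(1-s) * (Real.sin x/Real.cos x) * ((1+s)/(1-s) * (Real.sin y/Real.cos y))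
        = ((1+s)^2 * (Real.sin x*Real.sin y)) / ((1-s)^2*(Real.cos x*Real.cos y)) := by
      field_simp
    rw [expand, div_le_one (by positivity)]
    nlinarith [main]
  have hCpos : 0 < k * Real.tan y := by positivity
  have harc : Real.arctan (k * Real.tan x) + Real.arctan (k * Real.tan y) ≤ π/2 := by
    have h1 : k * Real.tan x ≤ (k * Real.tan y)⁻¹ := by
      rw [← one_div, le_div_iff₀ hCpos]
      exact hprod
    have h2 := Real.arctan_strictMono.monotone h1
    rw [Real.arctan_inv_of_pos hCpos] at h2
    linarith
  linarith



lemma K_eq (z : ℂ) (t : ℝ) :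
    (1 - ‖z‖ ^ 2) / ‖Complex.exp (t * Complex.I) - z‖ ^ 2
      = Q ‖z‖ (t - z.arg) := by
  rw [Q]
  congr 1
  rw [Complex.sq_norm, Complex.normSq_sub]
  have h1 : Complex.normSq (Complex.exp (t * Complex.I)) = 1 := by
    rw [Complex.normSq_eq_norm_sq, Complex.norm_exp_ofReal_mul_I]
    norm_num
  have h2 : Complex.normSq z = ‖z‖ ^ 2 := (Complex.sq_norm z).symm
  have h3 : (Complex.exp (t * Complex.I) * (starRingEnd ℂ) z).re
      = ‖z‖ * Real.cos (t - z.arg) := by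
    conv_lhs => rw [← Complex.norm_mul_exp_arg_mul_I z]
    rw [map_mul, ← Complex.exp_conj]
    have : (starRingEnd ℂ) ((z.arg : ℂ) * Complex.I) = -(z.arg : ℂ) * Complex.I := by
      simp [Complex.conj_I]
    rw [this]
    have hconjr : (starRingEnd ℂ) ((‖z‖ : ℝ) : ℂ) = ((‖z‖ : ℝ) : ℂ) :=
      Complex.conj_ofReal _
    rw [hconjr]
    have : Complex.exp (↑t * Complex.I) * (↑‖z‖ * Complex.exp (-↑z.arg * Complex.I))
        = ↑‖z‖ * Complex.exp (↑(t - z.arg) * Complex.I) := by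
      rw [mul_comm (Complex.exp (↑t * Complex.I)) _, mul_assoc, ← Complex.exp_add]
      push_cast
      ring_nf
    rw [this, Complex.re_ofReal_mul, Complex.exp_ofReal_mul_I_re]
  rw [h1, h2, h3]
  ring


/-- If `0 < δ < 1` and `z ∈ 𝔻` with `|1-z| > δ`, then
`∫_{δ<|t|<π} (1-|z|²)/|e^{it}-z|² dt ≥ π`, i.e. the harmonic measure of the
arc `E_δ = {e^{it} : δ ≤ |t| ≤ π}` at `z` is at least `1/2`. -/
theorem harmonic_measure_ge_half
    (δ : ℝ) (hδ0 : 0 < δ) (hδ1 : δ < 1)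
    (z : ℂ) (hz : z ∈ Metric.ball (0 : ℂ) 1)
    (hz1 : δ < ‖1 - z‖) :
    Real.pi ≤ ∫ t in {t : ℝ | δ < |t| ∧ |t| < Real.pi},
      (1 - ‖z‖ ^ 2) / ‖Complex.exp (t * Complex.I) - z‖ ^ 2 := by
  have hπ3 : (3:ℝ) < π := by linarith [Real.pi_gt_three]
  set r := ‖z‖ with hrdef
  set φ := z.arg with hφdef
  have hr0 : 0 ≤ r := norm_nonneg z
  have hr1 : r < 1 := by
    have := Metric.mem_ball.mp hz
    rwa [Complex.dist_eq, sub_zero] at this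
  have hr1' : (-1:ℝ) < r := by linarith
  have hφπ : |φ| ≤ π := Complex.abs_arg_le_pi z
  simp_rw [hrdef, K_eq z, ← hrdef, ← hφdef]
  -- the set as a union of two intervals
  have hset : {t : ℝ | δ < |t| ∧ |t| < π} = Set.Ioo (-π) (-δ) ∪ Set.Ioo δ π := by
    ext t
    simp only [Set.mem_setOf_eq, Set.mem_union, Set.mem_Ioo, abs_lt, lt_abs]
    constructor
    · rintro ⟨hδt | hδt, h1, h2⟩
      · right; exact ⟨hδt, h2⟩
      · left; exact ⟨h1, by linarith⟩
    · rintro (⟨h1, h2⟩ | ⟨h1, h2⟩)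
      · exact ⟨Or.inr (by linarith), h1, by linarith⟩
      · exact ⟨Or.inl h1, by linarith, h2⟩
  rw [hset]
  have hcont : Continuous (fun t : ℝ => Q r (t - φ)) :=
    (Q_cont hr1' hr1).comp (continuous_id.sub continuous_const)
  have hii : ∀ a b : ℝ, IntervalIntegrable (fun t : ℝ => Q r (t - φ)) volume a b :=
    fun a b => hcont.intervalIntegrable a b
  have hio : ∀ a b : ℝ, a ≤ b →
      IntegrableOn (fun t : ℝ => Q r (t - φ)) (Set.Ioo a b) volume := by
    intro a b hab
    exact (intervalIntegrable_iff_integrableOn_Ioo_of_le hab).mp (hii a b)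
  have hdisj : Disjoint (Set.Ioo (-π) (-δ)) (Set.Ioo δ π) := by
    rw [Set.disjoint_left]
    intro a ha hb
    have h1 := ha.2
    have h2 := hb.1
    linarith
  rw [setIntegral_union hdisj measurableSet_Ioo (hio _ _ (by linarith)) (hio _ _ (by linarith))]
  have hIoo : ∀ a b : ℝ, a ≤ b → ∫ t in Set.Ioo a b, Q r (t - φ)
      = ∫ t in a..b, Q r (t - φ) := by
    intro a b hab
    rw [intervalIntegral.integral_of_le hab, integral_Ioc_eq_integral_Ioo]
  rw [hIoo _ _ (by linarith), hIoo _ _ (by linarith)]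
  -- total integral is 2π
  have Qper : Function.Periodic (Q r) (2*π) := by
    intro u
    simp [Q, Real.cos_add_two_pi]
  have htot : ∫ t in (-π)..π, Q r (t - φ) = 2*π := by
    rw [intervalIntegral.integral_comp_sub_right (Q r) φ]
    have hp := Qper.intervalIntegral_add_eq (-π - φ) (-π)
    rw [show -π - φ + 2*π = π - φ by ring, show -π + 2*π = π by ring] at hp
    rw [hp]
    exact integral_total hr1' hr1
  -- middle integral is at most π
  have hmid : ∫ t in (-δ)..δ, Q r (t - φ) ≤ π := by
    rw [intervalIntegral.integral_comp_sub_right (Q r) φ]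
    have habs : ∫ u in (-δ - φ)..(δ - φ), Q r u = ∫ u in (|φ| - δ)..(|φ| + δ), Q r u := by
      rcases le_or_gt 0 φ with hφ | hφ
      · rw [abs_of_nonneg hφ]
        have h1 := intervalIntegral.integral_comp_neg (a := φ - δ) (b := φ + δ) (Q r)
        have h2 : ∫ x in (φ - δ)..(φ + δ), Q r (-x) = ∫ x in (φ - δ)..(φ + δ), Q r x := by
          apply intervalIntegral.integral_congr
          intro x _
          exact Q_even
        rw [h2] at h1
        rw [show -δ - φ = -(φ + δ) by ring, show δ - φ = -(φ - δ) by ring, ← h1]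
      · rw [abs_of_neg hφ, show -φ - δ = -δ - φ by ring, show -φ + δ = δ - φ by ring]
    rw [habs]
    have hφ'0 : 0 ≤ |φ| := abs_nonneg φ
    rcases lt_or_ge (|φ|) δ with hlt | hge
    · -- case b : use |1 - z| > δ
      have hre : z.re = r * Real.cos φ := by
        conv_lhs => rw [← Complex.norm_mul_exp_arg_mul_I z]
        rw [Complex.re_ofReal_mul, Complex.exp_ofReal_mul_I_re]
      have habs1z : ‖1 - z‖ ^ 2 = 1 - 2 * z.re + r ^ 2 := by
        rw [Complex.sq_norm, Complex.normSq_sub]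
        simp [Complex.normSq_eq_norm_sq]
        ring
      have hδsq : δ ^ 2 < ‖1 - z‖ ^ 2 := by
        apply pow_lt_pow_left₀ hz1 (le_of_lt hδ0)
        norm_num
      have hcon : 2 * r * Real.cos (|φ|) < 1 + r ^ 2 - δ ^ 2 := by
        rw [Real.cos_abs]
        nlinarith [hδsq, habs1z, hre]
      rw [show |φ| - δ = |φ| - δ by rfl]
      exact case_b hr0 hr1 hδ0 hδ1 hφ'0 hlt hcon
    · -- case a : shift down to [0, 2δ]
      have h1 := shift_le hr0 hr1 hδ0 hge hφπ
      have h2 : ∫ u in (0:ℝ)..(2*δ), Q r u ≤ π := by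
        rw [integral_Q hr1' hr1 (fun u hu => ?_)]
        · rw [g, g]
          have e0 : Real.tan (0/2) = 0 := by norm_num
          rw [e0, mul_zero, Real.arctan_zero, show 2*δ/2 = δ by ring]
          have := Real.arctan_lt_pi_div_two ((1+r)/(1-r) * Real.tan δ)
          linarith
        · rw [Set.uIcc_of_le (by linarith)] at hu
          constructor <;> [linarith [hu.1]; linarith [hu.2]]
      linarith
  have a1 := intervalIntegral.integral_add_adjacent_intervals
    (hii (-π) (-δ)) (hii (-δ) δ)
  have a2 := intervalIntegral.integral_add_adjacent_intervals
    (hii (-π) δ) (hii δ π)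
  linarith [a1, a2, htot, hmid]
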